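/- Let k ≥ 3 be an integer and let G be a finite simple graph whose vertex set V is partitioned into k independent sets V₁, V₂, …, V_k of G, each of cardinality at least 3. For each i ∈ {1,…,k} let Bᵢ be a binary hierarchy on Vᵢ. Define H_C := {V} ∪ B₁ ∪ ⋯ ∪ B_k; for each pair of distinct a, b ∈ V define H_{a,b} := {V, {a}, {b}} ∪ ⋃_{i=1}^{k} {A ∖ {a,b} : A ∈ Bᵢ, A ∖ {a,b} ≠ ∅}; and for each edge e = {a,b} of G define H_{S_e} := {V, e, {a}, {b}} ∪ ⋃_{i=1}^{k} {A ∖ e : A ∈ Bᵢ, A ∖ e ≠ ∅}. Then G has an independent set I with |I ∩ Vᵢ| = 1 for every i ∈ {1,…,k} if and only if there exists a subset L ⊆ V with |L| = k such that the restrictions to L of all the hierarchies H_C, H_{a,b} (over all distinct a, b ∈ V) and H_{S_e} (over all edges e of G) are pairwise equal (i.e., the corresponding collection of trees has an agreement subtree of size k). -/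

import Mathlib

/-- An independent set of a simple graph: no two of its vertices are adjacent. -/
def IsIndep {α : Type*} (G : SimpleGraph α) (I : Set α) : Prop :=
  ∀ u ∈ I, ∀ v ∈ I, ¬ G.Adj u v

/-- `F` is a hierarchy on `L`: a family of nonempty subsets of `L` containing `L`
itself and all singletons, and laminar (any two members are disjoint or nested). -/
def IsHierarchy {α : Type*} (L : Set α) (F : Set (Set α)) : Prop :=
  (∀ A ∈ F, A ⊆ L ∧ A.Nonempty) ∧ L ∈ F ∧ (∀ x ∈ L, {x} ∈ F) ∧
    ∀ A ∈ F, ∀ B ∈ F, A ∩ B = ∅ ∨ A ⊆ B ∨ B ⊆ A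

/-- The restriction `H|L := {A ∩ L : A ∈ H, A ∩ L ≠ ∅}` of a family of sets `H`
to a set `L`. -/
def restrictH {α : Type*} (H : Set (Set α)) (L : Set α) : Set (Set α) :=
  {S | ∃ A ∈ H, S = A ∩ L ∧ S.Nonempty}

/-- Laminar family with nonempty members. -/
def LamNe {α : Type*} (F : Set (Set α)) : Prop :=
  (∀ A ∈ F, A.Nonempty) ∧ ∀ A ∈ F, ∀ B ∈ F, A ∩ B = ∅ ∨ A ⊆ B ∨ B ⊆ A

namespace MastAux

variable {α : Type*}

lemma lamne_restrict {F : Set (Set α)} (h : LamNe F) (L : Set α) :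
    LamNe (restrictH F L) := by
  constructor
  · rintro S ⟨A, hA, rfl, hne⟩; exact hne
  · rintro S ⟨A, hA, rfl, -⟩ T ⟨B, hB, rfl, -⟩
    rcases h.2 A hA B hB with h' | h' | h'
    · left
      rw [← Set.subset_empty_iff] at h' ⊢
      intro x hx; exact h' ⟨hx.1.1, hx.2.1⟩
    · exact Or.inr (Or.inl fun x hx => ⟨h' hx.1, hx.2⟩)
    · exact Or.inr (Or.inr fun x hx => ⟨h' hx.1, hx.2⟩)

lemma restrictH_univ {F : Set (Set α)} (hne : ∀ A ∈ F, A.Nonempty) :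
    restrictH F Set.univ = F := by
  ext S
  constructor
  · rintro ⟨A, hA, rfl, -⟩; simpa using hA
  · intro hS; exact ⟨S, hS, by simp, hne S hS⟩

lemma restrictH_restrictH (F : Set (Set α)) (L₁ L₂ : Set α) :
    restrictH (restrictH F L₁) L₂ = restrictH F (L₁ ∩ L₂) := by
  ext S
  constructor
  · rintro ⟨B, ⟨A, hA, rfl, -⟩, rfl, hne⟩
    exact ⟨A, hA, Set.inter_assoc _ _ _, hne⟩
  · rintro ⟨A, hA, rfl, hne⟩
    refine ⟨A ∩ L₁, ⟨A, hA, rfl, ?_⟩, (Set.inter_assoc _ _ _).symm, hne⟩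
    obtain ⟨x, hx⟩ := hne
    exact ⟨x, hx.1, hx.2.1⟩

/-- helper: if S, T, S∪{x}, T∪{x} ∈ F, x ∉ S, x ∉ T, S ⊆ T then S = T. -/
lemma helper_eq {F : Set (Set α)} (h : LamNe F) {x : α} {S T : Set α}
    (hS : S ∈ F) (hT : T ∈ F) (hxS : x ∉ S) (hxT : x ∉ T)
    (hS1 : S ∪ {x} ∈ F) (hST : S ⊆ T) : S = T := by
  rcases h.2 (S ∪ {x}) hS1 T hT with hd | hsub | hsub
  · exfalso
    obtain ⟨y, hy⟩ := h.1 S hS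
    have : y ∈ (S ∪ {x}) ∩ T := ⟨Or.inl hy, hST hy⟩
    rw [hd] at this; exact this
  · exact absurd (hsub (Or.inr rfl)) hxT
  · refine subset_antisymm hST fun y hy => ?_
    rcases hsub hy with hy' | hy'
    · exact hy'
    · exact absurd (hy' ▸ hy) hxT

lemma step_lemma [Fintype α] {F : Set (Set α)} (h : LamNe F) (x : α) :
    F.ncard ≤ (restrictH F {x}ᶜ).ncard + 2 := by
  classical
  set R := restrictH F {x}ᶜ with hRdef
  set F₀ : Set (Set α) := {A ∈ F | x ∉ A} with hF0
  set F₁ : Set (Set α) := {A ∈ F | x ∈ A} with hF1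
  have hsplit : F = F₀ ∪ F₁ := by
    ext A; by_cases hx : x ∈ A <;> simp [hF0, hF1, hx]
  have hdisj : Disjoint F₀ F₁ := by
    rw [Set.disjoint_left]; rintro A ⟨-, hx⟩ ⟨-, hx'⟩; exact hx hx'
  have hmemR : ∀ A ∈ F, (A \ {x}).Nonempty → A \ {x} ∈ R := by
    intro A hA hne
    exact ⟨A, hA, by rw [Set.diff_eq], hne⟩
  have hF0R : F₀ ⊆ R := by
    rintro A ⟨hA, hx⟩
    have heq : A \ {x} = A := by
      ext y; simp only [Set.mem_diff, Set.mem_singleton_iff, and_iff_left_iff_imp]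
      rintro hy rfl; exact hx hy
    have hn : (A \ {x}).Nonempty := by rw [heq]; exact h.1 A hA
    have := hmemR A hA hn
    rwa [heq] at this
  set g : Set α → Set α := fun A => A \ {x} with hg
  have hinj : Set.InjOn g F₁ := by
    rintro A ⟨-, hxA⟩ B ⟨-, hxB⟩ hAB
    ext y
    by_cases hy : y = x
    · subst hy; simp [hxA, hxB]
    · constructor <;> intro hmem
      · have : y ∈ g A := ⟨hmem, hy⟩
        rw [hAB] at this; exact this.1
      · have : y ∈ g B := ⟨hmem, hy⟩
        rw [← hAB] at this; exact this.1
  have hgsub : g '' F₁ ⊆ insert ∅ R := by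
    rintro S ⟨A, ⟨hA, -⟩, rfl⟩
    rcases Set.eq_empty_or_nonempty (g A) with he | hne
    · exact Or.inl he
    · exact Or.inr (hmemR A hA hne)
  have hover : (F₀ ∩ g '' F₁).Subsingleton := by
    rintro S ⟨⟨hSF, hxS⟩, ⟨A, ⟨hAF, hxA⟩, rfl⟩⟩ T ⟨⟨hTF, hxT⟩, ⟨B, ⟨hBF, hxB⟩, rfl⟩⟩
    have hAg : A = g A ∪ {x} := by
      ext y; by_cases hy : y = x
      · subst hy; simp [hxA]
      · simp [hg, hy]
    have hBg : B = g B ∪ {x} := by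
      ext y; by_cases hy : y = x
      · subst hy; simp [hxB]
      · simp [hg, hy]
    have hA' : g A ∪ {x} ∈ F := hAg ▸ hAF
    have hB' : g B ∪ {x} ∈ F := hBg ▸ hBF
    rcases h.2 _ hA' _ hB' with hd | hsub | hsub
    · exfalso
      have : x ∈ (g A ∪ {x}) ∩ (g B ∪ {x}) := ⟨Or.inr rfl, Or.inr rfl⟩
      rw [hd] at this; exact this
    · have hST : g A ⊆ g B := by
        intro y hy
        rcases hsub (Or.inl hy) with hy' | hy'
        · exact hy'
        · exact absurd (hy' ▸ hy) hxS
      exact helper_eq h hSF hTF hxS hxT hA' hST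
    · have hST : g B ⊆ g A := by
        intro y hy
        rcases hsub (Or.inl hy) with hy' | hy'
        · exact hy'
        · exact absurd (hy' ▸ hy) hxT
      exact (helper_eq h hTF hSF hxT hxS hB' hST).symm
  -- counting
  have e1 : F.ncard = F₀.ncard + F₁.ncard := by
    rw [hsplit]; exact Set.ncard_union_eq hdisj (Set.toFinite _) (Set.toFinite _)
  have e2 : (g '' F₁).ncard = F₁.ncard := Set.ncard_image_of_injOn hinj
  have e3 : (F₀ ∪ g '' F₁).ncard + (F₀ ∩ g '' F₁).ncard = F₀.ncard + (g '' F₁).ncard :=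
    Set.ncard_union_add_ncard_inter _ _ (Set.toFinite _) (Set.toFinite _)
  have e4 : (F₀ ∪ g '' F₁).ncard ≤ R.ncard + 1 := by
    have : (F₀ ∪ g '' F₁) ⊆ insert ∅ R :=
      Set.union_subset (fun S hS => Or.inr (hF0R hS)) hgsub
    calc (F₀ ∪ g '' F₁).ncard ≤ (insert ∅ R).ncard := Set.ncard_le_ncard this (Set.toFinite _)
      _ ≤ R.ncard + 1 := Set.ncard_insert_le _ _
  have e5 : (F₀ ∩ g '' F₁).ncard ≤ 1 := by
    rw [Set.ncard_le_one (Set.toFinite _)]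
    exact fun a ha b hb => hover ha hb
  omega

lemma ncard_le_restrict [Fintype α] (D : Set α) :
    ∀ F : Set (Set α), LamNe F → F.ncard ≤ (restrictH F Dᶜ).ncard + 2 * D.ncard := by
  refine Set.Finite.induction_on (motive := fun D _ => ∀ F : Set (Set α), LamNe F → F.ncard ≤ (restrictH F Dᶜ).ncard + 2 * D.ncard) D (Set.toFinite D) ?_ ?_
  · intro F hF
    rw [Set.compl_empty, restrictH_univ hF.1]
    simp
  · intro x D' hxD' hD'fin IH F hF
    have h1 := step_lemma hF x
    have h2 := IH (restrictH F {x}ᶜ) (lamne_restrict hF _)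
    rw [restrictH_restrictH] at h2
    have hc : ({x}ᶜ ∩ D'ᶜ : Set α) = (insert x D')ᶜ := by
      ext y; simp [not_or, and_comm]
    rw [hc] at h2
    rw [Set.ncard_insert_of_notMem hxD' (Set.toFinite _)]
    omega

lemma binary_resolves [Fintype α] {X : Set α} {F : Set (Set α)} (hH : IsHierarchy X F)
    (hcount : F.ncard = 2 * X.ncard - 1) {t : Set α} (ht : t ⊆ X) (ht3 : t.ncard = 3) :
    ∃ A ∈ F, (A ∩ t).ncard = 2 := by
  by_contra hcon
  push_neg at hcon
  have hlam : LamNe F := ⟨fun A hA => (hH.1 A hA).2, hH.2.2.2⟩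
  have key := ncard_le_restrict (X \ t) F hlam
  have hre : restrictH F (X \ t)ᶜ = restrictH F t := by
    have hAeq : ∀ A ∈ F, A ∩ (X \ t)ᶜ = A ∩ t := by
      intro A hA
      have hAX := (hH.1 A hA).1
      ext y
      simp only [Set.mem_inter_iff, Set.mem_compl_iff, Set.mem_diff, not_and, not_not]
      constructor
      · rintro ⟨hyA, him⟩; exact ⟨hyA, him (hAX hyA)⟩
      · rintro ⟨hyA, hyt⟩; exact ⟨hyA, fun _ => hyt⟩
    ext S
    constructor
    · rintro ⟨A, hA, rfl, hne⟩
      exact ⟨A, hA, (hAeq A hA), hne⟩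
    · rintro ⟨A, hA, rfl, hne⟩
      exact ⟨A, hA, (hAeq A hA).symm, hne⟩
  rw [hre] at key
  have hsub : restrictH F t ⊆ insert t ((fun a => ({a} : Set α)) '' t) := by
    rintro S ⟨A, hA, rfl, hne⟩
    have hSt : A ∩ t ⊆ t := Set.inter_subset_right
    have hle : (A ∩ t).ncard ≤ 3 := ht3 ▸ Set.ncard_le_ncard hSt (Set.toFinite _)
    have hge : 1 ≤ (A ∩ t).ncard := (Set.ncard_pos (Set.toFinite _)).mpr hne
    have hne2 : (A ∩ t).ncard ≠ 2 := hcon A hA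
    interval_cases h : (A ∩ t).ncard
    · obtain ⟨a, ha⟩ := Set.ncard_eq_one.mp h
      exact Or.inr ⟨a, hSt (ha ▸ rfl), ha.symm⟩
    · omega
    · left
      exact Set.eq_of_subset_of_ncard_le hSt (by omega) (Set.toFinite _)
  have h4 : (restrictH F t).ncard ≤ 4 := by
    calc (restrictH F t).ncard ≤ (insert t ((fun a => ({a} : Set α)) '' t)).ncard :=
          Set.ncard_le_ncard hsub (Set.toFinite _)
      _ ≤ ((fun a => ({a} : Set α)) '' t).ncard + 1 := Set.ncard_insert_le _ _
      _ ≤ t.ncard + 1 := by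
          have := Set.ncard_image_le (f := fun a => ({a} : Set α)) (s := t) (Set.toFinite _)
          omega
      _ = 4 := by rw [ht3]
  have hX3 : 3 ≤ X.ncard := ht3 ▸ Set.ncard_le_ncard ht (Set.toFinite _)
  have hDt : (X \ t).ncard = X.ncard - 3 := by
    rw [Set.ncard_diff ht (Set.toFinite _), ht3]
  omega

end MastAux

theorem mast_reduction_correctness {α : Type*} [Fintype α]
    (G : SimpleGraph α) (k : ℕ) (hk : 3 ≤ k)
    -- the vertex set of `G` is partitioned into `k` independent sets `V₁, …, V_k`
    (Vs : Fin k → Set α)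
    (hpart : ∀ x : α, ∃! i, x ∈ Vs i)
    (hindep : ∀ i, IsIndep G (Vs i))
    (hcard3 : ∀ i, 3 ≤ (Vs i).ncard)
    (Bs : Fin k → Set (Set α))
    -- each `Bᵢ` is a binary hierarchy on `Vᵢ` (binary ⇔ it has `2|Vᵢ| - 1` members)
    (hB : ∀ i, IsHierarchy (Vs i) (Bs i) ∧ (Bs i).ncard = 2 * (Vs i).ncard - 1) :
    -- `V` is the (whole) vertex set of `G`
    let V : Set α := Set.univ
    -- the hierarchy of the tree `C = ⟨B₁, …, B_k⟩`
    let HC : Set (Set α) := {V} ∪ ⋃ i, Bs i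
    -- the hierarchy of the tree `C_{a,b}`
    let Hab : α → α → Set (Set α) := fun a b =>
      {V, {a}, {b}} ∪ ⋃ i, {S | ∃ A ∈ Bs i, S = A \ {a, b} ∧ S.Nonempty}
    -- the hierarchy of the tree `S_e` for an edge `e = {a, b}` of `G`
    let HS : α → α → Set (Set α) := fun a b =>
      {V, {a, b}, {a}, {b}} ∪ ⋃ i, {S | ∃ A ∈ Bs i, S = A \ {a, b} ∧ S.Nonempty}
    ((∃ I : Set α, IsIndep G I ∧ ∀ i, (I ∩ Vs i).ncard = 1) ↔
      (∃ L : Set α, L.ncard = k ∧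
        (∀ a b : α, a ≠ b → restrictH (Hab a b) L = restrictH HC L) ∧
        (∀ a b : α, G.Adj a b → restrictH (HS a b) L = restrictH HC L))) := by
  intro V HC Hab HS
  classical
  have i0 : Fin k := ⟨0, by omega⟩
  have memHC : ∀ A : Set α, A ∈ HC ↔ A = Set.univ ∨ ∃ i, A ∈ Bs i := by
    intro A
    show A ∈ ({Set.univ} ∪ ⋃ i, Bs i : Set (Set α)) ↔ _
    simp [Set.mem_union, Set.mem_iUnion]
  have memHab : ∀ a b A, A ∈ Hab a b ↔
      (A = Set.univ ∨ A = {a} ∨ A = {b} ∨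
        ∃ i, ∃ A' ∈ Bs i, A = A' \ {a, b} ∧ A.Nonempty) := by
    intro a b A
    show A ∈ ({Set.univ, {a}, {b}} ∪
      ⋃ i, {S | ∃ A ∈ Bs i, S = A \ {a, b} ∧ S.Nonempty} : Set (Set α)) ↔ _
    simp only [Set.mem_union, Set.mem_insert_iff, Set.mem_singleton_iff, Set.mem_iUnion,
      Set.mem_setOf_eq]
    tauto
  have memHS : ∀ a b A, A ∈ HS a b ↔
      (A = Set.univ ∨ A = {a, b} ∨ A = {a} ∨ A = {b} ∨
        ∃ i, ∃ A' ∈ Bs i, A = A' \ {a, b} ∧ A.Nonempty) := by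
    intro a b A
    show A ∈ ({Set.univ, {a, b}, {a}, {b}} ∪
      ⋃ i, {S | ∃ A ∈ Bs i, S = A \ {a, b} ∧ S.Nonempty} : Set (Set α)) ↔ _
    simp only [Set.mem_union, Set.mem_insert_iff, Set.mem_singleton_iff, Set.mem_iUnion,
      Set.mem_setOf_eq]
    tauto
  constructor
  · -- forward direction
    rintro ⟨I, hI, hcard⟩
    have hone : ∀ i, ∃ x, I ∩ Vs i = {x} := fun i => Set.ncard_eq_one.mp (hcard i)
    choose f hf using hone
    have hfm : ∀ i, f i ∈ I ∩ Vs i := fun i => by rw [hf i]; exact rfl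
    have hfI : ∀ i, f i ∈ I := fun i => (hfm i).1
    have hfV : ∀ i, f i ∈ Vs i := fun i => (hfm i).2
    have hIne : I.Nonempty := ⟨f i0, hfI i0⟩
    have hinj : Function.Injective f := by
      intro i j hij
      obtain ⟨w, hw, hu⟩ := hpart (f i)
      rw [hu i (hfV i), hu j (hij ▸ hfV j)]
    have hIk : I.ncard = k := by
      have hIr : I = Set.range f := by
        apply Set.Subset.antisymm
        · intro x hx
          obtain ⟨i, hi, -⟩ := hpart x
          have hxm : x ∈ I ∩ Vs i := ⟨hx, hi⟩
          rw [hf i] at hxm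
          exact ⟨i, hxm.symm⟩
        · rintro x ⟨i, rfl⟩; exact hfI i
      rw [hIr, ← Set.image_univ, Set.ncard_image_of_injective _ hinj, Set.ncard_univ,
        Nat.card_eq_fintype_card, Fintype.card_fin]
    have habs : ∀ (i : Fin k) (A : Set α), A ⊆ Vs i → (A ∩ I).Nonempty →
        ∃ x ∈ I, A ∩ I = {x} := by
      intro i A hAV hne
      have hsub : A ∩ I ⊆ {f i} := by
        intro y hy
        have : y ∈ I ∩ Vs i := ⟨hy.2, hAV hy.1⟩
        rw [hf i] at this; exact this
      exact ⟨f i, hfI i, (Set.Nonempty.subset_singleton_iff hne).mp hsub⟩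
    set T : Set (Set α) := insert I {S | ∃ x ∈ I, S = {x}} with hT
    have hsingT : ∀ x, x ∈ I → ({x} : Set α) ∈ T := fun x hx => Or.inr ⟨x, hx, rfl⟩
    have hsing_mem : ∀ x, x ∈ I → ∃ A' : Set α, (∃ i, A' ∈ Bs i) ∧ A' = {x} := by
      intro x hx
      obtain ⟨i, hi, -⟩ := hpart x
      exact ⟨{x}, ⟨i, (hB i).1.2.2.1 x hi⟩, rfl⟩
    have hTC : restrictH HC I = T := by
      ext S
      simp only [hT, Set.mem_insert_iff, Set.mem_setOf_eq]
      constructor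
      · rintro ⟨A, hA, rfl, hne⟩
        rcases (memHC A).mp hA with rfl | ⟨i, hAB⟩
        · exact Or.inl (Set.univ_inter I)
        · exact Or.inr (habs i A ((hB i).1.1 A hAB).1 hne)
      · rintro (hSI | ⟨x, hx, rfl⟩)
        · exact ⟨Set.univ, (memHC _).mpr (Or.inl rfl), by rw [hSI, Set.univ_inter],
            by rw [hSI]; exact hIne⟩
        · obtain ⟨A', ⟨i, hA'⟩, rfl⟩ := hsing_mem x hx
          exact ⟨{x}, (memHC _).mpr (Or.inr ⟨i, hA'⟩),
            (Set.inter_eq_left.mpr (Set.singleton_subset_iff.mpr hx)).symm, ⟨x, rfl⟩⟩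
    -- common facts for Hab/HS
    have hdiff_from : ∀ (a b : α) (i : Fin k) (A' : Set α), A' ∈ Bs i →
        ((A' \ {a, b}) ∩ I).Nonempty → ∃ x ∈ I, (A' \ {a, b}) ∩ I = {x} := by
      intro a b i A' hA' hne
      exact habs i _ (Set.diff_subset.trans ((hB i).1.1 A' hA').1) hne
    have hsing_diff : ∀ (a b x : α), x ∈ I → x ≠ a → x ≠ b →
        ∃ i, ∃ A' ∈ Bs i, ({x} : Set α) = A' \ {a, b} ∧ ({x} : Set α).Nonempty := by
      intro a b x hx hxa hxb
      obtain ⟨A', ⟨i, hA'⟩, hAx⟩ := hsing_mem x hx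
      refine ⟨i, A', hA', ?_, ⟨x, rfl⟩⟩
      subst hAx
      ext y
      simp only [Set.mem_singleton_iff, Set.mem_diff, Set.mem_insert_iff]
      constructor
      · rintro rfl; exact ⟨rfl, by tauto⟩
      · rintro ⟨rfl, -⟩; rfl
    have hsingle_inter : ∀ x : α, x ∈ I → ({x} : Set α) = {x} ∩ I :=
      fun x hx => (Set.inter_eq_left.mpr (Set.singleton_subset_iff.mpr hx)).symm
    have hsabs : ∀ (a : α) (S : Set α), S ⊆ {a} → S.Nonempty → a ∈ S ∧ S = {a} := by
      intro a S hsub hne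
      obtain ⟨y, hy⟩ := hne
      have := hsub hy
      rw [Set.mem_singleton_iff] at this
      subst this
      exact ⟨hy, (Set.Nonempty.subset_singleton_iff ⟨y, hy⟩).mp hsub⟩
    refine ⟨I, hIk, ?_, ?_⟩
    · -- Hab
      intro a b hab'
      rw [hTC]
      ext S
      simp only [hT, Set.mem_insert_iff, Set.mem_setOf_eq]
      constructor
      · rintro ⟨A, hA, rfl, hne⟩
        rcases (memHab a b A).mp hA with rfl | rfl | rfl | ⟨i, A', hA', rfl, -⟩
        · exact Or.inl (Set.univ_inter I)
        · obtain ⟨ha, heq⟩ := hsabs a _ (Set.inter_subset_left) hne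
          exact Or.inr ⟨a, ha.2, heq⟩
        · obtain ⟨hb, heq⟩ := hsabs b _ (Set.inter_subset_left) hne
          exact Or.inr ⟨b, hb.2, heq⟩
        · exact Or.inr (hdiff_from a b i A' hA' hne)
      · rintro (hSI | ⟨x, hx, rfl⟩)
        · exact ⟨Set.univ, (memHab _ _ _).mpr (Or.inl rfl), by rw [hSI, Set.univ_inter],
            by rw [hSI]; exact hIne⟩
        · by_cases hxa : x = a
          · subst hxa
            exact ⟨{x}, (memHab _ _ _).mpr (Or.inr (Or.inl rfl)), hsingle_inter x hx,
              ⟨x, rfl⟩⟩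
          by_cases hxb : x = b
          · subst hxb
            exact ⟨{x}, (memHab _ _ _).mpr (Or.inr (Or.inr (Or.inl rfl))), hsingle_inter x hx,
              ⟨x, rfl⟩⟩
          · exact ⟨{x}, (memHab _ _ _).mpr (Or.inr (Or.inr (Or.inr
              (hsing_diff a b x hx hxa hxb)))), hsingle_inter x hx, ⟨x, rfl⟩⟩
    · -- HS
      intro a b hadj
      rw [hTC]
      ext S
      simp only [hT, Set.mem_insert_iff, Set.mem_setOf_eq]
      constructor
      · rintro ⟨A, hA, rfl, hne⟩
        rcases (memHS a b A).mp hA with rfl | rfl | rfl | rfl | ⟨i, A', hA', rfl, -⟩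
        · exact Or.inl (Set.univ_inter I)
        · -- {a,b} ∩ I
          have hnot : ¬ (a ∈ I ∧ b ∈ I) := fun ⟨ha, hb⟩ => hI a ha b hb hadj
          obtain ⟨y, hy⟩ := hne
          right
          rcases hy.1 with rfl | rfl
          · refine ⟨y, hy.2, ?_⟩
            ext z
            simp only [Set.mem_inter_iff, Set.mem_insert_iff, Set.mem_singleton_iff]
            constructor
            · rintro ⟨rfl | rfl, hz⟩
              · rfl
              · exact absurd ⟨hy.2, hz⟩ hnot
            · rintro rfl; exact ⟨Or.inl rfl, hy.2⟩
          · refine ⟨y, hy.2, ?_⟩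
            ext z
            simp only [Set.mem_inter_iff, Set.mem_insert_iff, Set.mem_singleton_iff]
            constructor
            · rintro ⟨rfl | rfl, hz⟩
              · exact absurd ⟨hz, hy.2⟩ hnot
              · rfl
            · rintro rfl; exact ⟨Or.inr rfl, hy.2⟩
        · obtain ⟨ha, heq⟩ := hsabs a _ (Set.inter_subset_left) hne
          exact Or.inr ⟨a, ha.2, heq⟩
        · obtain ⟨hb, heq⟩ := hsabs b _ (Set.inter_subset_left) hne
          exact Or.inr ⟨b, hb.2, heq⟩
        · exact Or.inr (hdiff_from a b i A' hA' hne)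
      · rintro (hSI | ⟨x, hx, rfl⟩)
        · exact ⟨Set.univ, (memHS _ _ _).mpr (Or.inl rfl), by rw [hSI, Set.univ_inter],
            by rw [hSI]; exact hIne⟩
        · by_cases hxa : x = a
          · subst hxa
            exact ⟨{x}, (memHS _ _ _).mpr (Or.inr (Or.inr (Or.inl rfl))), hsingle_inter x hx,
              ⟨x, rfl⟩⟩
          by_cases hxb : x = b
          · subst hxb
            exact ⟨{x}, (memHS _ _ _).mpr (Or.inr (Or.inr (Or.inr (Or.inl rfl)))),
              hsingle_inter x hx, ⟨x, rfl⟩⟩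
          · exact ⟨{x}, (memHS _ _ _).mpr (Or.inr (Or.inr (Or.inr (Or.inr
              (hsing_diff a b x hx hxa hxb))))), hsingle_inter x hx, ⟨x, rfl⟩⟩
  · -- backward direction
    rintro ⟨L, hLk, h1, h2⟩
    have hL3 : 3 ≤ L.ncard := hLk ▸ hk
    have hLne : L.Nonempty := (Set.ncard_pos (Set.toFinite _)).mp (by omega)
    have htwo : ∀ x : α, ∃ y, y ≠ x := by
      intro x
      obtain ⟨p, hp, q, hq, hpq⟩ := (Set.one_lt_ncard (Set.toFinite _)).mp
        (show 1 < (Vs i0).ncard by have := hcard3 i0; omega)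
      by_cases hxp : p = x
      · exact ⟨q, fun h => hpq (by rw [h, hxp])⟩
      · exact ⟨p, hxp⟩
    have pair : ∀ S ∈ restrictH HC L, ∀ x ∈ S, S = L ∨ S = {x} := by
      intro S hS x hxS
      obtain ⟨y, hyx⟩ := htwo x
      rw [← h1 x y (Ne.symm hyx)] at hS
      obtain ⟨A, hA, rfl, hne⟩ := hS
      rcases (memHab x y A).mp hA with rfl | rfl | rfl | ⟨i, A', hA', rfl, -⟩
      · exact Or.inl (Set.univ_inter L)
      · exact Or.inr ((Set.Nonempty.subset_singleton_iff ⟨x, hxS⟩).mp Set.inter_subset_left)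
      · exact absurd (Set.mem_singleton_iff.mp hxS.1) (Ne.symm hyx)
      · exact absurd (Set.mem_insert x {y}) hxS.1.2
    have hVL : ∀ i, (Vs i ∩ L).Subsingleton := by
      intro i u hu v hv
      by_contra huv
      have hmem : Vs i ∩ L ∈ restrictH HC L :=
        ⟨Vs i, (memHC _).mpr (Or.inr ⟨i, (hB i).1.2.1⟩), rfl, ⟨u, hu⟩⟩
      rcases pair _ hmem u hu with hcase | hcase
      · have hLVi : L ⊆ Vs i := Set.inter_eq_right.mp hcase
        obtain ⟨t, htL, ht3⟩ := Set.exists_subset_card_eq hL3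
        obtain ⟨A, hA, hA2⟩ := MastAux.binary_resolves (hB i).1 (hB i).2 (htL.trans hLVi) ht3
        obtain ⟨p, q, hpq, hpqeq⟩ := Set.ncard_eq_two.mp hA2
        have hpAt : p ∈ A ∩ t := by rw [hpqeq]; exact Or.inl rfl
        have hqAt : q ∈ A ∩ t := by rw [hpqeq]; exact Or.inr rfl
        have hALmem : A ∩ L ∈ restrictH HC L :=
          ⟨A, (memHC _).mpr (Or.inr ⟨i, hA⟩), rfl, ⟨p, hpAt.1, htL hpAt.2⟩⟩
        rcases pair _ hALmem p ⟨hpAt.1, htL hpAt.2⟩ with hc | hc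
        · have hLA : L ⊆ A := fun z hz => (hc.symm ▸ hz : z ∈ A ∩ L).1
          have hAt : A ∩ t = t := Set.inter_eq_right.mpr (htL.trans hLA)
          rw [hAt, ht3] at hA2
          omega
        · have hq' : q ∈ ({p} : Set α) := hc ▸ (⟨hqAt.1, htL hqAt.2⟩ : q ∈ A ∩ L)
          exact hpq (Set.mem_singleton_iff.mp hq').symm
      · have hv' : v ∈ ({u} : Set α) := hcase ▸ hv
        exact absurd (Set.mem_singleton_iff.mp hv').symm huv
    have hLVs : ∀ i, (L ∩ Vs i).ncard = 1 := by
      have hex : ∀ x : α, ∃ i, x ∈ Vs i := fun x => (hpart x).exists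
      choose idx hidx using hex
      have hg : Function.Injective (fun x : L => idx x.1) := by
        intro x y hxy
        apply Subtype.ext
        exact hVL (idx x.1) ⟨hidx x.1, x.2⟩ ⟨by rw [show idx x.1 = idx y.1 from hxy]; exact hidx y.1, y.2⟩
      have hcardL : Nat.card L = Nat.card (Fin k) := by
        rw [Nat.card_coe_set_eq, hLk, Nat.card_eq_fintype_card, Fintype.card_fin]
      have hbij := (Nat.bijective_iff_injective_and_card _).mpr ⟨hg, hcardL⟩
      intro i
      obtain ⟨x, hx⟩ := hbij.2 i
      rw [Set.ncard_eq_one]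
      refine ⟨x, ?_⟩
      have hxVi : (x : α) ∈ Vs i := by rw [← hx]; exact hidx x.1
      ext z
      simp only [Set.mem_inter_iff, Set.mem_singleton_iff]
      constructor
      · rintro ⟨hzL, hzV⟩; exact hVL i ⟨hzV, hzL⟩ ⟨hxVi, x.2⟩
      · rintro rfl; exact ⟨x.2, hxVi⟩
    refine ⟨L, ?_, hLVs⟩
    intro u hu v hv hadj
    have hne : u ≠ v := G.ne_of_adj hadj
    have hmem : ({u, v} : Set α) ∩ L ∈ restrictH (HS u v) L :=
      ⟨{u, v}, (memHS u v _).mpr (Or.inr (Or.inl rfl)), rfl, ⟨u, Or.inl rfl, hu⟩⟩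
    rw [h2 u v hadj] at hmem
    have hUV : ({u, v} : Set α) ∩ L = {u, v} :=
      Set.inter_eq_left.mpr (by rintro z (rfl | rfl); exacts [hu, hv])
    rcases pair _ hmem u ⟨Or.inl rfl, hu⟩ with hc | hc
    · have hL2 : L.ncard = 2 := by
        rw [← hc, hUV, Set.ncard_pair hne]
      omega
    · have hv' : v ∈ ({u} : Set α) := hc ▸ (⟨Or.inr rfl, hv⟩ : v ∈ ({u, v} : Set α) ∩ L)
      exact hne (Set.mem_singleton_iff.mp hv').symm
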